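/- Let m>0 and let κ∈ℂ with Im κ>0 and Re κ≠0. Then (2|κ|²/π)·∫_ℝ (k²+m²)/|κ²−k²|² dk = −4·Im[ (κ²+m²)·conj(κ) / (κ²−conj(κ)²) ]. -/

import Mathlib

open MeasureTheory
open Filter Set Topology

noncomputable section

lemma ratio_aux (a b : ℝ) (hb : b ≠ 0) (l : Filter ℝ)
    (h : Tendsto (fun k : ℝ => k⁻¹) l (𝓝 0)) (h0 : ∀ᶠ k in l, k ≠ 0) :
    Tendsto (fun k : ℝ => ((k - a)^2 + b^2) / ((k + a)^2 + b^2)) l (𝓝 1) := by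
  have hnum : Tendsto (fun k : ℝ => (1 - a * k⁻¹)^2 + (b * k⁻¹)^2) l (𝓝 1) := by
    have := (((tendsto_const_nhds (x := (1:ℝ))).sub (h.const_mul a)).pow 2).add ((h.const_mul b).pow 2)
    simpa using this
  have hden : Tendsto (fun k : ℝ => (1 + a * k⁻¹)^2 + (b * k⁻¹)^2) l (𝓝 1) := by
    have := (((tendsto_const_nhds (x := (1:ℝ))).add (h.const_mul a)).pow 2).add ((h.const_mul b).pow 2)
    simpa using this
  have hq := hnum.div hden one_ne_zero
  rw [div_one] at hq
  refine hq.congr' ?_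
  filter_upwards [h0] with k hk
  have hd : (1 + a * k⁻¹)^2 + (b * k⁻¹)^2 ≠ 0 := by positivity
  simp only [Pi.div_apply]
  field_simp

lemma key_integral (m a b : ℝ) (ha : a ≠ 0) (hb : 0 < b) :
    ∫ k : ℝ, (k^2 + m^2) / (((k - a)^2 + b^2) * ((k + a)^2 + b^2))
      = Real.pi * ((a^2 + b^2) + m^2) / (2 * (a^2 + b^2) * b) := by
  have hb' : b ≠ 0 := hb.ne'
  have hr0 : 0 < a^2 + b^2 := by positivity
  set r : ℝ := a^2 + b^2 with hrdef
  set A : ℝ := (r - m^2) / (4 * a * r) with hA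
  set C : ℝ := (r + m^2) / (4 * r * b) with hC
  set f : ℝ → ℝ := fun k => (k^2 + m^2) / (((k - a)^2 + b^2) * ((k + a)^2 + b^2)) with hf
  set F : ℝ → ℝ := fun k =>
      A / 2 * (Real.log ((k - a)^2 + b^2) - Real.log ((k + a)^2 + b^2))
        + C * (Real.arctan ((k - a)/b) + Real.arctan ((k + a)/b)) with hF
  have hp1 : ∀ k : ℝ, 0 < (k - a)^2 + b^2 := fun k => by positivity
  have hp2 : ∀ k : ℝ, 0 < (k + a)^2 + b^2 := fun k => by positivity
  -- derivative
  have hderiv : ∀ k : ℝ, HasDerivAt F (f k) k := by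
    intro k
    have d1 : HasDerivAt (fun k : ℝ => (k - a)^2 + b^2) (2 * (k - a)) k := by
      simpa using ((((hasDerivAt_id k).sub_const a).pow 2).add_const (b^2))
    have d2 : HasDerivAt (fun k : ℝ => (k + a)^2 + b^2) (2 * (k + a)) k := by
      simpa using ((((hasDerivAt_id k).add_const a).pow 2).add_const (b^2))
    have l1 := d1.log (hp1 k).ne'
    have l2 := d2.log (hp2 k).ne'
    have a1 : HasDerivAt (fun k : ℝ => Real.arctan ((k - a)/b))
        (1 / (1 + ((k - a)/b)^2) * (1/b)) k := by
      have := (((hasDerivAt_id k).sub_const a).div_const b).arctan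
      simpa using this
    have a2 : HasDerivAt (fun k : ℝ => Real.arctan ((k + a)/b))
        (1 / (1 + ((k + a)/b)^2) * (1/b)) k := by
      have := (((hasDerivAt_id k).add_const a).div_const b).arctan
      simpa using this
    have hd := ((l1.sub l2).const_mul (A/2)).add ((a1.add a2).const_mul C)
    refine HasDerivAt.congr_deriv hd ?_
    rw [hf, hA, hC]
    have h1 := (hp1 k).ne'
    have h2 := (hp2 k).ne'
    have h3 : 1 + ((k - a)/b)^2 ≠ 0 := by positivity
    have h4 : 1 + ((k + a)/b)^2 ≠ 0 := by positivity
    field_simp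
    ring
  -- nonneg
  have hnonneg : ∀ k : ℝ, 0 ≤ f k := by
    intro k
    have := hp1 k; have := hp2 k
    positivity
  -- limits of arctan pieces
  have harc_top : ∀ c : ℝ, Tendsto (fun k : ℝ => Real.arctan ((k + c)/b)) atTop (𝓝 (Real.pi/2)) := by
    intro c
    have h1 : Tendsto (fun k : ℝ => (k + c)/b) atTop atTop :=
      (tendsto_atTop_add_const_right _ c tendsto_id).atTop_div_const hb
    exact (Real.tendsto_arctan_atTop.mono_right nhdsWithin_le_nhds).comp h1
  have harc_bot : ∀ c : ℝ, Tendsto (fun k : ℝ => Real.arctan ((k + c)/b)) atBot (𝓝 (-(Real.pi/2))) := by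
    intro c
    have h1 : Tendsto (fun k : ℝ => (k + c)/b) atBot atBot :=
      (tendsto_atBot_add_const_right _ c tendsto_id).atBot_div_const hb
    exact (Real.tendsto_arctan_atBot.mono_right nhdsWithin_le_nhds).comp h1
  -- limits of log piece
  have hlog : ∀ l : Filter ℝ, Tendsto (fun k : ℝ => k⁻¹) l (𝓝 0) → (∀ᶠ k in l, k ≠ 0) →
      Tendsto (fun k : ℝ => Real.log ((k - a)^2 + b^2) - Real.log ((k + a)^2 + b^2)) l (𝓝 0) := by
    intro l hl h0
    have hratio := ratio_aux a b hb' l hl h0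
    have := (Real.continuousAt_log one_ne_zero).tendsto.comp hratio
    rw [Real.log_one] at this
    refine this.congr fun k => ?_
    exact Real.log_div (hp1 k).ne' (hp2 k).ne'
  have hinvtop : Tendsto (fun k : ℝ => k⁻¹) atTop (𝓝 0) := tendsto_inv_atTop_zero
  have hinvbot : Tendsto (fun k : ℝ => k⁻¹) atBot (𝓝 0) := by
    have h1 : Tendsto (fun k : ℝ => -(-k)⁻¹) atBot (𝓝 (-0)) :=
      ((tendsto_inv_atTop_zero (𝕜 := ℝ)).comp tendsto_neg_atBot_atTop).neg
    simpa [inv_neg] using h1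
  have htop : Tendsto F atTop (𝓝 (C * Real.pi)) := by
    have hl1 := hlog atTop hinvtop ((eventually_gt_atTop 0).mono (fun k hk => hk.ne'))
    have ha1 : Tendsto (fun k : ℝ => Real.arctan ((k - a)/b)) atTop (𝓝 (Real.pi/2)) := by
      simpa [sub_eq_add_neg] using harc_top (-a)
    have := (hl1.const_mul (A/2)).add ((ha1.add (harc_top a)).const_mul C)
    rw [hF]
    convert this using 1
    ring_nf
  have hbot : Tendsto F atBot (𝓝 (-(C * Real.pi))) := by
    have hl1 := hlog atBot hinvbot ((eventually_lt_atBot 0).mono (fun k hk => hk.ne))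
    have ha1 : Tendsto (fun k : ℝ => Real.arctan ((k - a)/b)) atBot (𝓝 (-(Real.pi/2))) := by
      simpa [sub_eq_add_neg] using harc_bot (-a)
    have := (hl1.const_mul (A/2)).add ((ha1.add (harc_bot a)).const_mul C)
    rw [hF]
    convert this using 1
    ring_nf
  -- integrability
  have hIoi : IntegrableOn f (Ioi 0) :=
    integrableOn_Ioi_deriv_of_nonneg' (fun x _ => hderiv x) (fun x _ => hnonneg x) htop
  have heven : ∀ x : ℝ, f (-x) = f x := by
    intro x
    simp only [hf]
    have e1 : ((-x : ℝ) - a)^2 + b^2 = ((x + a)^2 + b^2) := by ring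
    have e2 : ((-x : ℝ) + a)^2 + b^2 = ((x - a)^2 + b^2) := by ring
    rw [e1, e2, neg_pow, mul_comm ((x + a)^2 + b^2)]
    norm_num
  have hIio : IntegrableOn f (Iio 0) := by
    have h1 : IntegrableOn (f ∘ Neg.neg) (Neg.neg ⁻¹' (Ioi (0:ℝ))) :=
      (MeasurePreserving.integrableOn_comp_preimage (Measure.measurePreserving_neg _)
        (Homeomorph.neg ℝ).measurableEmbedding).2 hIoi
    have h2 : (Neg.neg ⁻¹' (Ioi (0:ℝ))) = Iio 0 := by
      ext x; simp
    rw [h2] at h1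
    refine h1.congr_fun (fun x _ => ?_) measurableSet_Iio
    exact (heven x).symm ▸ rfl
  have hint : Integrable f := by
    rw [← integrableOn_univ, ← Set.Iic_union_Ioi (a := (0:ℝ))]
    exact ((integrableOn_Iic_iff_integrableOn_Iio).2 hIio).union hIoi
  have hval := integral_of_hasDerivAt_of_tendsto hderiv hint hbot htop
  have : ∫ k : ℝ, f k = C * Real.pi - -(C * Real.pi) := hval
  rw [hf] at this
  rw [this, hC]
  field_simp
  ring


/-- the contour-integral identity
`(2|κ|²/π)∫_ℝ (k²+m²)/|κ²−k²|² dk = −4 Im[(κ²+m²) conj(κ)/(κ²−conj(κ)²)]`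
for `Im κ > 0`, `Re κ ≠ 0`. -/
theorem contour_integral_identity
    (m : ℝ) (hm : 0 < m) (κ : ℂ) (hκim : 0 < κ.im) (hκre : κ.re ≠ 0) :
    (2 * ‖κ‖^2 / Real.pi)
        * ∫ k : ℝ, (k^2 + m^2) / ‖κ^2 - (k:ℂ)^2‖^2
      = -4 * (((κ^2 + ((m:ℂ))^2) * (starRingEnd ℂ) κ
          / (κ^2 - ((starRingEnd ℂ) κ)^2)).im) := by

  have hb' : κ.im ≠ 0 := hκim.ne'
  have hr0 : (0:ℝ) < κ.re^2 + κ.im^2 := by positivity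
  have habs : ‖κ‖^2 = κ.re^2 + κ.im^2 := by
    rw [Complex.sq_norm, Complex.normSq_apply]; ring
  have hden : ∀ k : ℝ, ‖κ^2 - (k:ℂ)^2‖^2
      = ((k - κ.re)^2 + κ.im^2) * ((k + κ.re)^2 + κ.im^2) := by
    intro k
    rw [Complex.sq_norm, Complex.normSq_apply]
    simp only [Complex.sub_re, Complex.sub_im, pow_two, Complex.mul_re, Complex.mul_im,
      Complex.ofReal_re, Complex.ofReal_im]
    ring
  simp only [hden, habs]
  rw [key_integral m κ.re κ.im hκre hκim]
  have h4 : κ^2 - ((starRingEnd ℂ) κ)^2 = ((4*κ.re*κ.im : ℝ) : ℂ) * Complex.I := by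
    apply Complex.ext <;>
      simp only [pow_two, Complex.sub_re, Complex.sub_im, Complex.mul_re, Complex.mul_im,
        Complex.conj_re, Complex.conj_im, Complex.ofReal_re, Complex.ofReal_im,
        Complex.I_re, Complex.I_im] <;> ring
  rw [h4]
  have hre : ((κ^2 + ((m:ℂ))^2) * (starRingEnd ℂ) κ).re
      = κ.re * (κ.re^2 + κ.im^2 + m^2) := by
    simp only [pow_two, Complex.add_re, Complex.add_im, Complex.mul_re, Complex.mul_im,
      Complex.conj_re, Complex.conj_im, Complex.ofReal_re, Complex.ofReal_im]
    ring
  rw [Complex.div_im]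
  simp only [Complex.mul_re, Complex.mul_im, Complex.ofReal_re, Complex.ofReal_im,
    Complex.I_re, Complex.I_im, Complex.normSq_apply, hre]
  field_simp
  ring
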